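/- If 0 < μτ < 1/e, then Ψ(t) = dexp(-μt; -μτ) for t ≥ 0 (and Ψ(t) = 1 for t < 0) is a valid survival function: it is non-increasing, right continuous, Ψ(0) = 1, and Ψ(t) → 0 as t → ∞. Consequently ψ(t) = μ dexp(-μ(t-τ); -μτ) defines a probability density on [0, ∞) with ∫_0^∞ ψ(t) dt = 1. -/

import Mathlib

open Real Set Filter MeasureTheory

noncomputable def dexp (μ τ t : ℝ) : ℝ :=
  ∑' n : ℕ, (-μ) ^ n * (t - n * τ) ^ n / (Nat.factorial n) * (if (n : ℝ) * τ ≤ t then 1 else 0)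
noncomputable def Gd (μ τ : ℝ) (N : ℕ) (t : ℝ) : ℝ :=
  1 + ∑ n ∈ Finset.range N,
    (-μ) ^ (n+1) * (max (t - (n+1) * τ) 0) ^ (n+1) / (Nat.factorial (n+1))

lemma dexp_eq_G {μ τ : ℝ} (hτ : 0 < τ) {t : ℝ} (ht0 : 0 ≤ t) {N : ℕ}
    (htN : t < (N + 1) * τ) : dexp μ τ t = Gd μ τ N t := by
  have h0 : ∀ n ∉ Finset.range (N+1),
      (-μ) ^ n * (t - n * τ) ^ n / (Nat.factorial n) * (if (n : ℝ) * τ ≤ t then 1 else 0) = 0 := by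
    intro n hn
    simp only [Finset.mem_range, not_lt] at hn
    have : ¬ ((n:ℝ) * τ ≤ t) := by
      push_neg
      calc t < (N+1) * τ := htN
        _ ≤ (n:ℝ) * τ := by
          apply mul_le_mul_of_nonneg_right _ hτ.le
          exact_mod_cast hn
    rw [if_neg this, mul_zero]
  rw [dexp, tsum_eq_sum h0, Finset.sum_range_succ']
  have hfirst : (-μ) ^ 0 * (t - (0:ℕ) * τ) ^ 0 / (Nat.factorial 0) *
      (if ((0:ℕ) : ℝ) * τ ≤ t then 1 else 0) = 1 := by
    norm_num [ht0]
  rw [hfirst, Gd, add_comm]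
  congr 1
  apply Finset.sum_congr rfl
  intro n _
  by_cases h : ((n:ℝ)+1) * τ ≤ t
  · rw [if_pos (by push_cast; linarith), mul_one]
    rw [max_eq_left (by push_cast; linarith)]
    push_cast
    ring
  · rw [if_neg (by push_cast; push_cast at h; linarith), mul_zero]
    rw [max_eq_right (by push_cast at h ⊢; linarith), zero_pow (Nat.succ_ne_zero n)]
    simp

lemma dexp_of_neg {μ τ : ℝ} (hτ : 0 < τ) {t : ℝ} (ht : t < 0) : dexp μ τ t = 0 := by
  rw [dexp]
  convert tsum_zero with n
  have : ¬ ((n:ℝ) * τ ≤ t) := by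
    push_neg
    calc t < 0 := ht
      _ ≤ (n:ℝ) * τ := by positivity
  rw [if_neg this, mul_zero]

lemma dexp_eq_one {μ τ : ℝ} (hτ : 0 < τ) {t : ℝ} (h0 : 0 ≤ t) (h1 : t ≤ τ) :
    dexp μ τ t = 1 := by
  rw [dexp_eq_G hτ h0 (N := 1) (by push_cast; linarith)]
  rw [Gd, Finset.sum_range_one]
  have : max (t - ((0:ℕ) + 1) * τ) 0 = 0 := max_eq_right (by push_cast; linarith)
  rw [this]
  norm_num

-- derivative of (max (s - a) 0)^(n+1), n ≥ 1
lemma max_pow_hasDerivAt (a t : ℝ) (n : ℕ) (hn : 1 ≤ n) :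
    HasDerivAt (fun s => (max (s - a) 0) ^ (n+1)) (((n:ℝ)+1) * (max (t - a) 0) ^ n) t := by
  rcases lt_trichotomy t a with h | rfl | h
  · have hev : (fun s => (max (s - a) 0) ^ (n+1)) =ᶠ[nhds t] fun _ => 0 := by
      filter_upwards [Iio_mem_nhds h] with s hs
      rw [max_eq_right (by simp only [mem_Iio] at hs; linarith), zero_pow (Nat.succ_ne_zero n)]
    rw [max_eq_right (by linarith), zero_pow (Nat.one_le_iff_ne_zero.mp hn), mul_zero]
    exact (hasDerivAt_const t (0:ℝ)).congr_of_eventuallyEq hev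
  · rw [sub_self, max_self, zero_pow (Nat.one_le_iff_ne_zero.mp hn), mul_zero]
    rw [hasDerivAt_iff_tendsto_slope]
    refine squeeze_zero_norm' (a := fun s => |s - t| ^ n) ?_ ?_
    · filter_upwards [self_mem_nhdsWithin] with s _
      have h1 : |max (s - t) 0| ≤ |s - t| := by
        rcases le_total (s - t) 0 with h | h
        · rw [max_eq_right h]; simp [abs_nonneg]
        · rw [max_eq_left h]
      have h2 : slope (fun s => (max (s - t) 0) ^ (n+1)) t s
          = (max (s - t) 0) ^ (n+1) / (s - t) := by
        simp [slope, vsub_eq_sub, sub_self, max_self, zero_pow (Nat.succ_ne_zero n), div_eq_inv_mul]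
      rw [h2]
      rcases eq_or_ne s t with rfl | hst
      · simp [abs_nonneg]
      · have hst' : s - t ≠ 0 := sub_ne_zero.mpr hst
        rw [norm_div, Real.norm_eq_abs, Real.norm_eq_abs, abs_pow, pow_succ]
        rw [mul_div_assoc]
        calc |max (s - t) 0| ^ n * (|max (s - t) 0| / |s - t|)
            ≤ |s - t| ^ n * 1 := by
              apply mul_le_mul (pow_le_pow_left₀ (abs_nonneg _) h1 n)
                (div_le_one_of_le₀ h1 (abs_nonneg _)) (by positivity) (by positivity)
          _ = |s - t| ^ n := mul_one _
    · have : Tendsto (fun s => |s - t| ^ n) (nhds t) (nhds 0) := by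
        have h0 : Tendsto (fun s : ℝ => |s - t|) (nhds t) (nhds 0) := by
          have hc : Continuous (fun s : ℝ => |s - t|) := by continuity
          have := hc.tendsto t
          simpa using this
        have := h0.pow n
        simpa [zero_pow (Nat.one_le_iff_ne_zero.mp hn)] using this
      exact this.mono_left nhdsWithin_le_nhds
  · have hev : (fun s => (max (s - a) 0) ^ (n+1)) =ᶠ[nhds t] fun s => (s - a) ^ (n+1) := by
      filter_upwards [Ioi_mem_nhds h] with s hs
      rw [max_eq_left (by simp only [mem_Ioi] at hs; linarith)]
    rw [max_eq_left (by linarith)]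
    have hd : HasDerivAt (fun s : ℝ => (s - a) ^ (n+1)) (((n:ℝ)+1) * (t - a) ^ n) t := by
      have := ((hasDerivAt_id t).sub_const a).fun_pow (n+1)
      simpa [Nat.add_sub_cancel] using this
    exact hd.congr_of_eventuallyEq hev

lemma Gd_continuous (μ τ : ℝ) (N : ℕ) : Continuous (Gd μ τ N) := by
  apply continuous_const.add
  apply continuous_finset_sum
  intro n _
  apply Continuous.div_const
  apply continuous_const.mul
  exact ((continuous_id.sub continuous_const).max continuous_const).pow (n+1)

lemma dexp_continuousOn {μ τ : ℝ} (hτ : 0 < τ) : ContinuousOn (dexp μ τ) (Ici 0) := by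
  intro t ht
  obtain ⟨N, hN⟩ : ∃ N : ℕ, t + 1 ≤ (N + 1) * τ := by
    obtain ⟨N, hN⟩ := exists_nat_ge ((t+1)/τ)
    exact ⟨N, by rw [div_le_iff₀ hτ] at hN; nlinarith⟩
  have hev : dexp μ τ =ᶠ[nhdsWithin t (Ici 0)] Gd μ τ N := by
    have hmem : Ioo (t-1) (t+1) ∈ nhdsWithin t (Ici 0) :=
      mem_nhdsWithin_of_mem_nhds (Ioo_mem_nhds (by linarith) (by linarith))
    filter_upwards [hmem, self_mem_nhdsWithin] with s hs1 hs2
    exact dexp_eq_G hτ hs2 (lt_of_lt_of_le hs1.2 hN)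
  exact ((Gd_continuous μ τ N).continuousWithinAt).congr_of_eventuallyEq hev
    (dexp_eq_G hτ ht (by linarith))

lemma dexp_hasDerivAt {μ τ : ℝ} (hτ : 0 < τ) {t : ℝ} (ht : 0 < t) (hne : t ≠ τ) :
    HasDerivAt (dexp μ τ) (-μ * dexp μ τ (t - τ)) t := by
  obtain ⟨N, hN⟩ : ∃ N : ℕ, t < (N + 1) * τ := by
    obtain ⟨N, hN⟩ := exists_nat_ge (t/τ)
    exact ⟨N, by rw [div_le_iff₀ hτ] at hN; nlinarith⟩
  have hev : dexp μ τ =ᶠ[nhds t] Gd μ τ N := by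
    have hs : Ioo 0 ((N+1)*τ) ∈ nhds t := Ioo_mem_nhds ht hN
    filter_upwards [hs] with s hs
    exact dexp_eq_G hτ hs.1.le hs.2
  rcases lt_or_gt_of_ne hne with hlt | hgt
  · -- t < τ : dexp = 1 near t, derivative 0
    have h0 : dexp μ τ (t - τ) = 0 := dexp_of_neg hτ (by linarith)
    rw [h0, mul_zero]
    have hev1 : Gd μ τ N =ᶠ[nhds t] fun _ => 1 := by
      filter_upwards [Iio_mem_nhds hlt] with s hs
      simp only [mem_Iio] at hs
      rw [Gd]
      have : ∀ n ∈ Finset.range N,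
          (-μ) ^ (n+1) * (max (s - (n+1) * τ) 0) ^ (n+1) / (Nat.factorial (n+1)) = 0 := by
        intro n _
        have : max (s - ((n:ℝ)+1) * τ) 0 = 0 := by
          apply max_eq_right
          have h1 : τ ≤ ((n:ℝ)+1) * τ := by nlinarith [Nat.cast_nonneg (α := ℝ) n]
          linarith
        rw [this, zero_pow (Nat.succ_ne_zero n), mul_zero, zero_div]
      rw [Finset.sum_congr rfl this]
      simp
    have : HasDerivAt (Gd μ τ N) 0 t :=
      (hasDerivAt_const t (1:ℝ)).congr_of_eventuallyEq hev1
    exact this.congr_of_eventuallyEq hev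
  · -- t > τ
    obtain ⟨M, rfl⟩ : ∃ M, N = M + 1 := by
      rcases N with _ | M
      · exfalso; simp at hN; nlinarith
      · exact ⟨M, rfl⟩
    push_cast at hN
    -- derivative of each summand
    have hsum : HasDerivAt (Gd μ τ (M+1))
        (∑ n ∈ Finset.range (M+1), (-μ)^(n+1) * (max (t - (n+1)*τ) 0)^n / (Nat.factorial n)) t := by
      apply HasDerivAt.const_add
      apply HasDerivAt.fun_sum
      intro n _
      rcases Nat.eq_zero_or_pos n with rfl | hn
      · -- term -μ * max(s-τ,0) / 1
        simp only [Nat.cast_zero, zero_add, pow_one, pow_zero, Nat.factorial_one,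
          Nat.factorial_zero, Nat.cast_one, div_one, mul_one, one_mul]
        have hev2 : (fun s : ℝ => -μ * ((s - τ) ⊔ 0)) =ᶠ[nhds t] fun s => (-μ) * (s - τ) := by
          filter_upwards [Ioi_mem_nhds hgt] with s hs
          simp only [mem_Ioi] at hs
          rw [max_eq_left (by linarith)]
        have hd : HasDerivAt (fun s : ℝ => (-μ) * (s - τ)) (-μ) t := by
          simpa using ((hasDerivAt_id t).sub_const τ).const_mul (-μ)
        exact hd.congr_of_eventuallyEq hev2
      · have := (max_pow_hasDerivAt ((n+1) * τ) t n hn).const_mul ((-μ)^(n+1) / (Nat.factorial (n+1)))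
        have heq : (-μ)^(n+1) / (Nat.factorial (n+1)) * (((n:ℝ)+1) * (max (t - (n+1)*τ) 0) ^ n)
            = (-μ)^(n+1) * (max (t - (n+1)*τ) 0)^n / (Nat.factorial n) := by
          rw [Nat.factorial_succ]
          push_cast
          field_simp
        rw [heq] at this
        apply this.congr_of_eventuallyEq
        filter_upwards with s
        ring
    -- identify the derivative with -μ * dexp (t - τ)
    have hid : (∑ n ∈ Finset.range (M+1), (-μ)^(n+1) * (max (t - (n+1)*τ) 0)^n / (Nat.factorial n))
        = -μ * dexp μ τ (t - τ) := by
      rw [dexp_eq_G hτ (by linarith) (N := M) (by push_cast; linarith), Gd,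
        Finset.sum_range_succ']
      push_cast
      rw [mul_add, mul_one, Finset.mul_sum, add_comm (-μ)]
      congr 1
      · apply Finset.sum_congr rfl
        intro n _
        rw [show t - ((n:ℝ) + 1 + 1) * τ = t - τ - ((n:ℝ) + 1) * τ by ring,
          Nat.factorial_succ]
        push_cast
        field_simp
        ring
      · norm_num
    rw [← hid]
    exact hsum.congr_of_eventuallyEq hev
lemma dexp_pos {μ τ : ℝ} (hμ : 0 < μ) (hτ : 0 < τ) (hμτ : μ * τ < (Real.exp 1)⁻¹) :
    ∀ t : ℝ, 0 ≤ t → 0 < dexp μ τ t := by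
  have hexp1 : (0:ℝ) < Real.exp 1 := Real.exp_pos 1
  have key : μ * Real.exp 1 < τ⁻¹ := by
    rw [inv_eq_one_div, lt_div_iff₀ hτ]
    calc μ * Real.exp 1 * τ = (μ * τ) * Real.exp 1 := by ring
      _ < (Real.exp 1)⁻¹ * Real.exp 1 := by
          apply mul_lt_mul_of_pos_right hμτ hexp1
      _ = 1 := inv_mul_cancel₀ hexp1.ne'
  set z : ℝ → ℝ := fun s => dexp μ τ s * Real.exp (s / τ) with hz
  have hzcont : ContinuousOn z (Ici 0) := by
    apply (dexp_continuousOn hτ).mul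
    exact (Real.continuous_exp.comp (continuous_id.div_const τ)).continuousOn
  have hz0 : z 0 = 1 := by
    simp [hz, dexp_eq_one hτ le_rfl hτ.le]
  have hzIcc : ∀ x ∈ Icc (0:ℝ) τ, z x = Real.exp (x / τ) := by
    intro x hx
    simp [hz, dexp_eq_one hτ hx.1 hx.2]
  have hzderiv : ∀ s : ℝ, 0 < s → s ≠ τ →
      HasDerivAt z (τ⁻¹ * z s - μ * Real.exp 1 * z (s - τ)) s := by
    intro s hs hsne
    have hd1 : HasDerivAt (dexp μ τ) (-μ * dexp μ τ (s - τ)) s := dexp_hasDerivAt hτ hs hsne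
    have hd2 : HasDerivAt (fun s : ℝ => Real.exp (s / τ)) (Real.exp (s / τ) * (1 / τ)) s := by
      have := ((hasDerivAt_id s).div_const τ).exp
      simpa using this
    have := hd1.mul hd2
    refine this.congr_deriv ?_
    have hsplit : Real.exp (s / τ) = Real.exp ((s - τ) / τ) * Real.exp 1 := by
      rw [← Real.exp_add]
      congr 1
      field_simp
      ring
    show _ = τ⁻¹ * (dexp μ τ s * Real.exp (s / τ)) - μ * Real.exp 1 * (dexp μ τ (s - τ) * Real.exp ((s - τ) / τ))
    rw [hsplit]
    field_simp
    ring
  -- the "bad" set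
  set S : Set ℝ := {s : ℝ | τ ≤ s ∧ (z s - z (s - τ) ≤ 0 ∨ z (s - τ) ≤ 0)} with hS
  have hzpos : ∀ t : ℝ, 0 ≤ t → 0 < z t := by
    by_cases hne : S.Nonempty
    swap
    · -- S empty
      intro t ht
      rw [Set.not_nonempty_iff_eq_empty] at hne
      by_contra hle
      push_neg at hle
      have : (t + τ) ∈ S := by
        constructor
        · linarith
        · right; simpa using hle
      rw [hne] at this
      exact this
    · exfalso
      have hbdd : BddBelow S := ⟨τ, fun s hs => hs.1⟩
      have hclosed : IsClosed S := by
        have h1 : ContinuousOn (fun s => z s - z (s - τ)) (Ici τ) := by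
          apply ContinuousOn.sub
          · exact hzcont.mono (fun x hx => le_trans hτ.le hx)
          · apply ContinuousOn.comp hzcont (continuousOn_id.sub continuousOn_const)
            intro x hx
            simp only [mem_Ici] at hx ⊢
            simp [id]
            linarith
        have h2 : ContinuousOn (fun s => z (s - τ)) (Ici τ) := by
          apply ContinuousOn.comp hzcont (continuousOn_id.sub continuousOn_const)
          intro x hx
          simp only [mem_Ici] at hx ⊢
          simp [id]
          linarith
        have : S = (Ici τ ∩ (fun s => z s - z (s - τ)) ⁻¹' Iic 0) ∪
            (Ici τ ∩ (fun s => z (s - τ)) ⁻¹' Iic 0) := by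
          ext s
          simp only [hS, mem_setOf_eq, mem_union, mem_inter_iff, mem_Ici, mem_preimage, mem_Iic]
          tauto
        rw [this]
        exact ((h1.preimage_isClosed_of_isClosed isClosed_Ici isClosed_Iic).union
          (h2.preimage_isClosed_of_isClosed isClosed_Ici isClosed_Iic))
      set t0 := sInf S with ht0def
      have ht0S : t0 ∈ S := hclosed.csInf_mem hne hbdd
      have ht0 : τ ≤ t0 := ht0S.1
      have hbefore : ∀ s, τ ≤ s → s < t0 → z (s - τ) < z s ∧ 0 < z (s - τ) := by
        intro s hs1 hs2
        have : s ∉ S := notMem_of_lt_csInf hs2 hbdd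
        simp only [hS, mem_setOf_eq, not_and, not_or, not_le] at this
        have := this hs1
        constructor <;> linarith [this.1, this.2]
      -- strict monotonicity of z on [0, t0]
      have hmono : ∀ a b : ℝ, 0 ≤ a → a < b → b ≤ t0 → z a < z b := by
        have hA : ∀ a b : ℝ, 0 ≤ a → a < b → b ≤ τ → z a < z b := by
          intro a b ha hab hb
          rw [hzIcc a ⟨ha, by linarith⟩, hzIcc b ⟨by linarith, hb⟩]
          apply Real.exp_lt_exp.mpr
          gcongr
        have hB : ∀ a b : ℝ, τ ≤ a → a < b → b ≤ t0 → z a < z b := by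
          intro a b ha hab hb
          have hsub : Icc τ t0 ⊆ Ici (0:ℝ) := fun x hx => le_trans hτ.le hx.1
          refine strictMonoOn_of_deriv_pos (convex_Icc τ t0) (hzcont.mono hsub) ?_
            ⟨ha, by linarith⟩ ⟨by linarith, hb⟩ hab
          intro x hx
          rw [interior_Icc] at hx
          have hx1 : τ < x := hx.1
          have hd := hzderiv x (by linarith) hx1.ne'
          rw [hd.deriv]
          have hbf := hbefore x hx1.le hx.2
          nlinarith [mul_lt_mul_of_pos_right key hbf.2, mul_lt_mul_of_pos_left hbf.1 (inv_pos.mpr hτ)]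
        intro a b ha hab hb
        rcases le_total b τ with h | h
        · exact hA a b ha hab h
        rcases lt_or_ge a τ with h' | h'
        · rcases eq_or_lt_of_le h with heq | hb'
          · exact hA a b ha hab heq.ge
          · exact lt_trans (hA a τ ha h' le_rfl) (hB τ b le_rfl hb' hb)
        · exact hB a b h' hab hb
      rcases ht0S.2 with hcase | hcase
      · have := hmono (t0 - τ) t0 (by linarith) (by linarith) le_rfl
        linarith
      · rcases eq_or_lt_of_le (by linarith : (0:ℝ) ≤ t0 - τ) with heq | hlt
        · rw [← heq, hz0] at hcase
          linarith
        · have := hmono 0 (t0 - τ) le_rfl hlt (by linarith)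
          rw [hz0] at this
          linarith
  intro t ht
  have := hzpos t ht
  have hexp : 0 < Real.exp (t / τ) := Real.exp_pos _
  simp only [hz] at this
  nlinarith

lemma dexp_nonneg {μ τ : ℝ} (hμ : 0 < μ) (hτ : 0 < τ) (hμτ : μ * τ < (Real.exp 1)⁻¹) (t : ℝ) :
    0 ≤ dexp μ τ t := by
  rcases lt_or_ge t 0 with h | h
  · rw [dexp_of_neg hτ h]
  · exact (dexp_pos hμ hτ hμτ t h).le

lemma dexp_antitoneOn {μ τ : ℝ} (hμ : 0 < μ) (hτ : 0 < τ) (hμτ : μ * τ < (Real.exp 1)⁻¹) :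
    AntitoneOn (dexp μ τ) (Ici 0) := by
  have h1 : AntitoneOn (dexp μ τ) (Ici τ) := by
    have hsub : Ici τ ⊆ Ici (0:ℝ) := Ici_subset_Ici.mpr hτ.le
    apply antitoneOn_of_deriv_nonpos (convex_Ici τ) ((dexp_continuousOn hτ).mono hsub)
    · intro x hx
      rw [interior_Ici] at hx
      exact ((dexp_hasDerivAt hτ (lt_trans hτ hx) hx.ne').differentiableAt).differentiableWithinAt
    · intro x hx
      rw [interior_Ici] at hx
      rw [(dexp_hasDerivAt hτ (lt_trans hτ hx) hx.ne').deriv]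
      have := dexp_nonneg hμ hτ hμτ (x - τ)
      nlinarith
  intro a ha b hb hab
  rcases le_total b τ with h | h
  · rw [dexp_eq_one hτ ha (le_trans hab h), dexp_eq_one hτ hb h]
  rcases le_total τ a with h' | h'
  · exact h1 h' h hab
  · rw [dexp_eq_one hτ ha h']
    calc dexp μ τ b ≤ dexp μ τ τ := h1 self_mem_Ici h h
      _ = 1 := dexp_eq_one hτ hτ.le le_rfl
/-- The survival function `Ψ(t) = dexp(-μt; -μτ)` for `t ≥ 0` (and `Ψ(t) = 1` for `t < 0`). -/
noncomputable def Ψdexp (μ τ t : ℝ) : ℝ := if t < 0 then 1 else dexp μ τ t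

set_option maxHeartbeats 1000000 in
/-- If `0 < μτ < 1/e`, then `Ψ` is a valid survival function: non-increasing, right
continuous, `Ψ(0) = 1`, `Ψ(t) → 0` as `t → ∞`; consequently
`ψ(t) = μ dexp(-μ(t-τ); -μτ)` is a probability density on `[0, ∞)`. -/
theorem dexp_is_survival_function (μ τ : ℝ) (hμ : 0 < μ) (hτ : 0 < τ)
    (hμτ : μ * τ < (Real.exp 1)⁻¹) :
    Antitone (fun t => Ψdexp μ τ t) ∧
    (∀ t : ℝ, Tendsto (fun s => Ψdexp μ τ s) (nhdsWithin t (Ici t)) (nhds (Ψdexp μ τ t))) ∧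
    Ψdexp μ τ 0 = 1 ∧
    Tendsto (fun t => Ψdexp μ τ t) atTop (nhds 0) ∧
    (∀ t : ℝ, 0 ≤ t → 0 ≤ μ * dexp μ τ (t - τ)) ∧
    ∫ t in Ioi (0 : ℝ), μ * dexp μ τ (t - τ) = 1 := by
  have hΨeq : ∀ t : ℝ, 0 ≤ t → Ψdexp μ τ t = dexp μ τ t := fun t ht => if_neg (not_lt.mpr ht)
  have hanti : AntitoneOn (dexp μ τ) (Ici 0) := dexp_antitoneOn hμ hτ hμτ
  have hΨanti : Antitone (fun t => Ψdexp μ τ t) := by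
    intro a b hab
    show Ψdexp μ τ b ≤ Ψdexp μ τ a
    by_cases hb : b < 0
    · simp only [Ψdexp]
      rw [if_pos hb, if_pos (by linarith)]
    push_neg at hb
    rw [hΨeq b hb]
    by_cases ha : a < 0
    · simp only [Ψdexp]
      rw [if_pos ha]
      calc dexp μ τ b ≤ dexp μ τ 0 := hanti self_mem_Ici hb hb
        _ = 1 := dexp_eq_one hτ le_rfl hτ.le
    · push_neg at ha
      rw [hΨeq a ha]
      exact hanti ha (le_trans ha hab) hab
  have hΨnonneg : ∀ t : ℝ, 0 ≤ Ψdexp μ τ t := by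
    intro t
    by_cases ht : t < 0
    · simp only [Ψdexp]; rw [if_pos ht]; norm_num
    · push_neg at ht
      rw [hΨeq t ht]
      exact dexp_nonneg hμ hτ hμτ t
  have hΨ0 : Ψdexp μ τ 0 = 1 := by
    rw [hΨeq 0 le_rfl]
    exact dexp_eq_one hτ le_rfl hτ.le
  -- right continuity
  have hrc : ∀ t : ℝ, Tendsto (fun s => Ψdexp μ τ s) (nhdsWithin t (Ici t)) (nhds (Ψdexp μ τ t)) := by
    intro t
    by_cases ht : t < 0
    · have hev : (fun s => Ψdexp μ τ s) =ᶠ[nhdsWithin t (Ici t)] fun _ => 1 := by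
        filter_upwards [mem_nhdsWithin_of_mem_nhds (Iio_mem_nhds ht)] with s hs
        exact if_pos hs
      rw [show Ψdexp μ τ t = 1 from if_pos ht]
      exact tendsto_const_nhds.congr' hev.symm
    · push_neg at ht
      have h2 : ContinuousWithinAt (dexp μ τ) (Ici t) t :=
        (dexp_continuousOn hτ t ht).mono (Ici_subset_Ici.mpr ht)
      exact h2.congr (fun s hs => hΨeq s (le_trans ht hs)) (hΨeq t ht)
  -- limit at infinity
  have htends : Tendsto (fun t => Ψdexp μ τ t) atTop (nhds 0) := by
    have hbdd : BddBelow (range (fun t => Ψdexp μ τ t)) := by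
      refine ⟨0, ?_⟩
      rintro y ⟨x, rfl⟩
      exact hΨnonneg x
    have htend := tendsto_atTop_ciInf hΨanti hbdd
    set L := ⨅ t, Ψdexp μ τ t with hL
    have hLnonneg : 0 ≤ L := le_ciInf hΨnonneg
    have hLle : ∀ t : ℝ, L ≤ Ψdexp μ τ t := fun t => ciInf_le hbdd t
    have hL0 : L = 0 := by
      by_contra hne0
      have hLpos : 0 < L := lt_of_le_of_ne hLnonneg (Ne.symm hne0)
      -- FTC contradiction
      set a := 2 * τ with ha
      set b := a + (1 + dexp μ τ a) / (μ * L) with hb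
      have haτ : τ < a := by rw [ha]; linarith
      have hab : a < b := by
        rw [hb]
        have h1 : 0 < 1 + dexp μ τ a := by
          have := dexp_nonneg hμ hτ hμτ a
          linarith
        have h2 : 0 < μ * L := mul_pos hμ hLpos
        have := div_pos h1 h2
        linarith
      have hderiv : ∀ x ∈ uIcc a b, HasDerivAt (dexp μ τ) (-μ * dexp μ τ (x - τ)) x := by
        intro x hx
        rw [uIcc_of_le hab.le] at hx
        have : a ≤ x := hx.1
        exact dexp_hasDerivAt hτ (by linarith) (by linarith [hx.1] : x ≠ τ)
      have hcontint : ContinuousOn (fun x => -μ * dexp μ τ (x - τ)) (uIcc a b) := by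
        apply ContinuousOn.mul continuousOn_const
        apply ContinuousOn.comp (dexp_continuousOn hτ) (continuousOn_id.sub continuousOn_const)
        intro x hx
        rw [uIcc_of_le hab.le] at hx
        simp only [mem_Ici, id, Pi.sub_apply]
        have : a ≤ x := hx.1
        linarith
      have hint : IntervalIntegrable (fun x => -μ * dexp μ τ (x - τ)) volume a b :=
        hcontint.intervalIntegrable
      have hftc := intervalIntegral.integral_eq_sub_of_hasDerivAt hderiv hint
      have hintconst : IntervalIntegrable (fun _ : ℝ => -μ * L) volume a b :=
        intervalIntegrable_const
      have hmonoint : ∫ x in a..b, -μ * dexp μ τ (x - τ) ≤ ∫ _ in a..b, -μ * L := by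
        apply intervalIntegral.integral_mono_on hab.le hint hintconst
        intro x hx
        have hx1 : a ≤ x := hx.1
        have : L ≤ dexp μ τ (x - τ) := by
          have h0 : (0:ℝ) ≤ x - τ := by linarith
          have := hLle (x - τ)
          rwa [hΨeq _ h0] at this
        nlinarith
      rw [hftc, intervalIntegral.integral_const, smul_eq_mul] at hmonoint
      have hbval : (b - a) * (-μ * L) = -(1 + dexp μ τ a) := by
        rw [hb]
        field_simp
        ring
      rw [hbval] at hmonoint
      have := dexp_nonneg hμ hτ hμτ b
      linarith
    rw [hL0] at htend
    exact htend
  have hdexp_tends : Tendsto (dexp μ τ) atTop (nhds 0) := by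
    apply htends.congr'
    filter_upwards [eventually_ge_atTop (0:ℝ)] with t ht
    exact hΨeq t ht
  -- the density is nonneg
  have hψnonneg : ∀ t : ℝ, 0 ≤ μ * dexp μ τ (t - τ) :=
    fun t => mul_nonneg hμ.le (dexp_nonneg hμ hτ hμτ _)
  -- integral computation
  set ψ : ℝ → ℝ := fun t => μ * dexp μ τ (t - τ) with hψ
  have hae : ∀ᵐ x : ℝ ∂volume, x ≠ τ := by
    rw [ae_iff]
    have : {x : ℝ | ¬ x ≠ τ} = {τ} := by ext x; simp
    rw [this]
    exact Real.volume_singleton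
  have hψ0 : ∀ x : ℝ, x < τ → ψ x = 0 := by
    intro x hx
    rw [hψ]
    simp only
    rw [dexp_of_neg hτ (by linarith), mul_zero]
  have hI1 : IntegrableOn ψ (Ioc 0 τ) volume := by
    have h0 : ψ =ᵐ[volume.restrict (Ioc 0 τ)] (fun _ => 0) := by
      filter_upwards [ae_restrict_mem measurableSet_Ioc, ae_restrict_of_ae hae] with x hx hxne
      exact hψ0 x (lt_of_le_of_ne hx.2 hxne)
    exact (integrable_zero _ _ _).congr h0.symm
  have hI2 : ∀ T : ℝ, τ ≤ T → IntegrableOn ψ (Ioc τ T) volume := by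
    intro T hT
    have hcont : ContinuousOn ψ (Icc τ T) := by
      apply ContinuousOn.mul continuousOn_const
      apply ContinuousOn.comp (dexp_continuousOn hτ) (continuousOn_id.sub continuousOn_const)
      intro x hx
      simp only [mem_Ici, id, Pi.sub_apply]
      linarith [hx.1]
    exact hcont.integrableOn_Icc.mono_set Ioc_subset_Icc_self
  have hIOn : ∀ T : ℝ, IntegrableOn ψ (Ioc 0 T) volume := by
    intro T
    rcases le_total T τ with h | h
    · exact hI1.mono_set (Ioc_subset_Ioc_right h)
    · rw [← Ioc_union_Ioc_eq_Ioc hτ.le h]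
      exact hI1.union (hI2 T h)
  have hint1 : IntervalIntegrable ψ volume 0 τ := by
    rw [intervalIntegrable_iff, uIoc_of_le hτ.le]
    exact hI1
  have hFTC : ∀ T : ℝ, τ ≤ T → ∫ t in (0:ℝ)..T, ψ t = 1 - dexp μ τ T := by
    intro T hT
    have hint2 : IntervalIntegrable ψ volume τ T := by
      rw [intervalIntegrable_iff, uIoc_of_le hT]
      exact hI2 T hT
    have hzero : ∫ x in (0:ℝ)..τ, ψ x = 0 := by
      have heq : ∫ x in (0:ℝ)..τ, ψ x = ∫ x in (0:ℝ)..τ, (0:ℝ) := by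
        apply intervalIntegral.integral_congr_ae
        filter_upwards [hae] with x hx hmem
        rw [uIoc_of_le hτ.le] at hmem
        exact hψ0 x (lt_of_le_of_ne hmem.2 hx)
      rw [heq, intervalIntegral.integral_zero]
    have hcontd : ContinuousOn (dexp μ τ) (Icc τ T) :=
      (dexp_continuousOn hτ).mono (fun x hx => le_trans hτ.le hx.1)
    have hderiv2 : ∀ x ∈ Ioo τ T, HasDerivWithinAt (dexp μ τ) (-μ * dexp μ τ (x - τ)) (Ioi x) x :=
      fun x hx => (dexp_hasDerivAt hτ (lt_trans hτ hx.1) hx.1.ne').hasDerivWithinAt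
    have hint2' : IntervalIntegrable (fun x => -μ * dexp μ τ (x - τ)) volume τ T := by
      have : (fun x => -μ * dexp μ τ (x - τ)) = fun x => -ψ x := by
        funext x; rw [hψ]; ring
      rw [this]
      exact hint2.neg
    have := intervalIntegral.integral_eq_sub_of_hasDeriv_right_of_le hT hcontd hderiv2 hint2'
    have h2 : ∫ x in τ..T, ψ x = 1 - dexp μ τ T := by
      have hneg : ∫ x in τ..T, -μ * dexp μ τ (x - τ) = -∫ x in τ..T, ψ x := by
        rw [← intervalIntegral.integral_neg]
        apply intervalIntegral.integral_congr
        intro x _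
        rw [hψ]; ring
      rw [hneg] at this
      rw [dexp_eq_one hτ hτ.le le_rfl] at this
      linarith
    rw [← intervalIntegral.integral_add_adjacent_intervals hint1 hint2, hzero, h2, zero_add]
  have htendint : Tendsto (fun T => ∫ t in (0:ℝ)..T, ψ t) atTop (nhds 1) := by
    have hev : (fun T => ∫ t in (0:ℝ)..T, ψ t) =ᶠ[atTop] fun T => 1 - dexp μ τ T := by
      filter_upwards [eventually_ge_atTop τ] with T hT
      exact hFTC T hT
    have : Tendsto (fun T => 1 - dexp μ τ T) atTop (nhds 1) := by
      have := hdexp_tends.const_sub 1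
      simpa using this
    exact this.congr' hev.symm
  have hIoi : IntegrableOn ψ (Ioi (0:ℝ)) volume := by
    apply MeasureTheory.integrableOn_Ioi_of_intervalIntegral_norm_tendsto
      (b := fun i : ℝ => i) (l := atTop) 1 0 (fun i => hIOn i) tendsto_id
    exact Filter.Tendsto.congr (fun i => intervalIntegral.integral_congr
      fun x _ => (Real.norm_of_nonneg (hψnonneg x)).symm) htendint
  have hfinal : ∫ t in Ioi (0:ℝ), ψ t = 1 := by
    have h1 := MeasureTheory.intervalIntegral_tendsto_integral_Ioi (l := atTop) (b := fun i : ℝ => i) 0 hIoi tendsto_id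
    exact tendsto_nhds_unique h1 htendint
  exact ⟨hΨanti, hrc, hΨ0, htends, fun t _ => hψnonneg t, hfinal⟩
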